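/- Let x_1 < x_2 < … < x_n be real numbers and E the n×n matrix with E_{jk} = exp(−|x_j − x_k|). For k-element subsets I = {i_1<…<i_k}, J = {j_1<…<j_k} of {1,…,n}, set α_m = min(i_m, j_m) and β_m = max(i_m, j_m). If (i_1,j_1) < (i_2,j_2) < … < (i_k,j_k) (meaning both entries of each pair are strictly less than both entries of the next pair), then det E_{IJ} = (∏_{m=1}^{k−1} (1 − E_{β_m α_{m+1}}²)) · ∏_{m=1}^{k} E_{α_m β_m}; otherwise det E_{IJ} = 0. -/

import Mathlib

open Matrix

/-- The matrix `E j k = exp (-|x j - x k|)`. -/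
noncomputable def Ematrix (n : ℕ) (x : Fin n → ℝ) : Matrix (Fin n) (Fin n) ℝ :=
  fun j k => Real.exp (-|x j - x k|)


lemma exp_abs_eq (a b : ℝ) :
    Real.exp (-|a - b|) = Real.exp (-a) * (Real.exp (-b) * min (Real.exp (2*a)) (Real.exp (2*b))) := by
  rcases le_total a b with h | h
  · rw [abs_of_nonpos (by linarith), min_eq_left (Real.exp_le_exp.mpr (by linarith)),
      ← Real.exp_add, ← Real.exp_add]
    ring_nf
  · rw [abs_of_nonneg (by linarith), min_eq_right (Real.exp_le_exp.mpr (by linarith)),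
      ← Real.exp_add, ← Real.exp_add]
    ring_nf

lemma exp2_min (a b : ℝ) : min (Real.exp (2*a)) (Real.exp (2*b)) = Real.exp (2 * min a b) := by
  rcases le_total a b with h | h
  · rw [min_eq_left (Real.exp_le_exp.mpr (by linarith)), min_eq_left h]
  · rw [min_eq_right (Real.exp_le_exp.mpr (by linarith)), min_eq_right h]

lemma exp2_max (a b : ℝ) : max (Real.exp (2*a)) (Real.exp (2*b)) = Real.exp (2 * max a b) := by
  rcases le_total a b with h | h
  · rw [max_eq_right (Real.exp_le_exp.mpr (by linarith)), max_eq_right h]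
  · rw [max_eq_left (Real.exp_le_exp.mpr (by linarith)), max_eq_left h]

lemma prod_shift {k : ℕ} (f : Fin k → ℝ) :
    (∏ m : Fin k, if h : (m:ℕ)+1 < k then f ⟨(m:ℕ)+1, h⟩ else 1) =
    ∏ m : Fin k, if (m:ℕ) = 0 then 1 else f m := by
  cases k with
  | zero => simp
  | succ s =>
    have L : (∏ m : Fin (s+1), if h : (m:ℕ)+1 < s+1 then f ⟨(m:ℕ)+1, h⟩ else 1)
        = ∏ m : Fin s, f m.succ := by
      rw [Fin.prod_univ_castSucc,
        show (if h : ((Fin.last s : Fin (s+1)):ℕ)+1 < s+1 then f ⟨((Fin.last s : Fin (s+1)):ℕ)+1, h⟩ else 1) = 1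
          from dif_neg (by simp), mul_one]
      refine Finset.prod_congr rfl fun m _ => ?_
      rw [dif_pos (by simpa using m.isLt)]
      exact congrArg f (Fin.ext (by simp))
    have R : (∏ m : Fin (s+1), if (m:ℕ) = 0 then 1 else f m) = ∏ m : Fin s, f m.succ := by
      rw [Fin.prod_univ_succ]
      simp only [Fin.val_zero, if_pos, Fin.val_succ]
      rw [one_mul]
      refine Finset.prod_congr rfl fun m _ => ?_
      rw [if_neg (by omega)]
    rw [L, R]


lemma det_zero_of_block {k : ℕ} (M : Matrix (Fin k) (Fin k) ℝ) (m : ℕ)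
    (hm : m + 1 < k) (c g : Fin k → ℝ)
    (H : ∀ p l : Fin k, (p : ℕ) ≤ m + 1 → m ≤ (l : ℕ) → M p l = c p * g l) :
    M.det = 0 := by
  classical
  have hk2 : m + 2 ≤ k := hm
  set e : Fin (m+2) → Fin k := fun p => ⟨p, lt_of_lt_of_le p.isLt hk2⟩ with he
  have einj : Function.Injective e := by
    intro p q h
    have h2 := congrArg Fin.val h
    exact Fin.ext h2
  set C : Matrix (Fin (m+2)) (Fin (m+1)) ℝ :=
    fun p j => if h : (j:ℕ) = 0 then c (e p) else M (e p) ⟨(j:ℕ)-1, by omega⟩ with hCdef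
  have hninj : ¬ Function.Injective C.vecMulLinear := by
    intro hinj
    have := LinearMap.finrank_le_finrank_of_injective hinj
    rw [Module.finrank_fin_fun, Module.finrank_fin_fun] at this
    omega
  obtain ⟨a, b, hab, hne⟩ := Function.not_injective_iff.mp hninj
  set d : Fin (m+2) → ℝ := a - b with hd
  have hd0 : d ≠ 0 := sub_ne_zero.mpr hne
  have hker : ∀ j : Fin (m+1), ∑ p : Fin (m+2), d p * C p j = 0 := by
    intro j
    have h1 : C.vecMulLinear d = 0 := by rw [hd, map_sub, hab, sub_self]
    have h2 := congrFun (show Matrix.vecMul d C = 0 by simpa [Matrix.vecMulLinear] using h1) j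
    simpa [Matrix.vecMul, dotProduct] using h2
  set v : Fin k → ℝ := fun q => if h : (q : ℕ) < m + 2 then d ⟨q, h⟩ else 0 with hv
  have hvep : ∀ p : Fin (m+2), v (e p) = d p := by
    intro p
    show (if h : ((e p : Fin k) : ℕ) < m + 2 then d ⟨(e p : Fin k), h⟩ else 0) = d p
    rw [dif_pos (show ((e p : Fin k) : ℕ) < m + 2 from p.isLt)]
  have hv0 : v ≠ 0 := by
    obtain ⟨p, hp⟩ := Function.ne_iff.mp hd0
    intro h
    exact hp (by rw [← hvep p, h]; rfl)
  have key : ∀ l : Fin k, ∑ q : Fin k, v q * M q l = ∑ p : Fin (m+2), d p * M (e p) l := by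
    intro l
    have step1 : ∑ p : Fin (m+2), d p * M (e p) l
        = ∑ q ∈ Finset.univ.map ⟨e, einj⟩, v q * M q l := by
      rw [Finset.sum_map]
      exact Finset.sum_congr rfl fun p _ => by rw [Function.Embedding.coeFn_mk, hvep p]
    rw [step1]
    refine (Finset.sum_subset (Finset.subset_univ _) ?_).symm
    intro q _ hq
    have hnlt : ¬ ((q : ℕ) < m + 2) := by
      intro hlt
      exact hq (Finset.mem_map.mpr ⟨⟨(q:ℕ), hlt⟩, Finset.mem_univ _, Fin.ext rfl⟩)
    show (if h : (q : ℕ) < m + 2 then d ⟨q, h⟩ else 0) * M q l = 0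
    rw [dif_neg hnlt, zero_mul]
  have hvM : Matrix.vecMul v M = 0 := by
    funext l
    show ∑ q : Fin k, v q * M q l = 0
    rw [key l]
    rcases lt_or_ge (l : ℕ) m with hl | hl
    · have h0 := hker ⟨(l:ℕ)+1, by omega⟩
      have hC : ∀ p : Fin (m+2), C p ⟨(l:ℕ)+1, by omega⟩ = M (e p) l := by
        intro p
        simp only [hCdef]
        rw [dif_neg (by simp)]
        exact congrArg (M (e p)) (Fin.ext (by simp))
      rw [← h0]
      exact Finset.sum_congr rfl fun p _ => by rw [hC p]
    · have h0 := hker 0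
      have hc0 : ∑ p : Fin (m+2), d p * c (e p) = 0 := by
        rw [← h0]
        refine Finset.sum_congr rfl fun p _ => ?_
        simp [hCdef]
      calc ∑ p : Fin (m+2), d p * M (e p) l
          = ∑ p : Fin (m+2), d p * c (e p) * g l := by
            refine Finset.sum_congr rfl fun p _ => ?_
            rw [H (e p) l (by exact Nat.lt_succ_iff.mp p.isLt) hl, mul_assoc]
        _ = (∑ p : Fin (m+2), d p * c (e p)) * g l := by rw [Finset.sum_mul]
        _ = 0 := by rw [hc0, zero_mul]
  exact Matrix.exists_vecMul_eq_zero_iff.mp ⟨v, hv0, hvM⟩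


lemma det_min_matrix : ∀ (k : ℕ) (u v : ℕ → ℝ),
    (∀ i, i < k → 0 < u i) → (∀ i, i < k → 0 < v i) →
    (∀ i, i + 1 < k → max (u i) (v i) < min (u (i+1)) (v (i+1))) →
    (Matrix.of fun p l : Fin k => min (u p) (v l)).det =
      ∏ p : Fin k, (min (u (p:ℕ)) (v (p:ℕ)) -
        if (p : ℕ) = 0 then 0 else max (u ((p:ℕ)-1)) (v ((p:ℕ)-1)))
  | 0, u, v, _, _, _ => by simp
  | (k+1), u, v, hu, hv, hint => by
    classical
    have hu0 : 0 < u 0 := hu 0 (by omega)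
    have hv0 : 0 < v 0 := hv 0 (by omega)
    set b : ℝ := max (u 0) (v 0) with hb
    have hchain : ∀ p, 1 ≤ p → p < k + 1 → b < min (u p) (v p) := by
      intro p
      induction p with
      | zero => intro h; omega
      | succ q ih =>
        intro _ hpk
        rcases Nat.eq_zero_or_pos q with h0 | h0
        · subst h0; exact hint 0 hpk
        · calc b < min (u q) (v q) := ih h0 (by omega)
            _ ≤ max (u q) (v q) := min_le_max
            _ < min (u (q+1)) (v (q+1)) := hint q hpk
    set c : ℝ := min (u 0) (v 0) with hc
    have hcpos : 0 < c := lt_min hu0 hv0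
    set t : ℝ := v 0 / c with ht
    set M : Matrix (Fin (k+1)) (Fin (k+1)) ℝ := Matrix.of fun p l => min (u p) (v l) with hM
    set coef : Fin (k+1) → ℝ := fun p => if p = 0 then 0 else -t with hcoef
    set B : Matrix (Fin (k+1)) (Fin (k+1)) ℝ :=
      Matrix.of fun p l => M p l + coef p * M 0 l with hB
    have hdet : B.det = M.det :=
      Matrix.det_eq_of_forall_row_eq_smul_add_const coef 0 (by simp [hcoef]) (fun p l => rfl)
    -- column zero of B
    have hB00 : B 0 0 = c := by
      simp [hB, hM, hcoef, hc]
    have hBp0 : ∀ p : Fin (k+1), p ≠ 0 → B p 0 = 0 := by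
      intro p hp
      have hp1 : 1 ≤ (p : ℕ) := by
        rcases Nat.eq_zero_or_pos (p : ℕ) with h | h
        · exact absurd (Fin.ext h) hp
        · exact h
      have hup : v 0 ≤ u (p : ℕ) := by
        have := hchain (p : ℕ) hp1 p.isLt
        have : v 0 ≤ b := le_max_right _ _
        calc v 0 ≤ b := this
          _ ≤ u (p:ℕ) := le_of_lt (lt_of_lt_of_le (hchain (p:ℕ) hp1 p.isLt) (min_le_left _ _))
      have e1 : M p 0 = v 0 := by
        simp only [hM, Matrix.of_apply]
        rw [show ((0 : Fin (k+1)) : ℕ) = 0 from rfl]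
        exact min_eq_right hup
      have e2 : M 0 0 = c := by simp [hM, hc]
      simp only [hB, Matrix.of_apply, e1, e2, hcoef, if_neg hp]
      rw [neg_mul, ht, div_mul_cancel₀ _ (ne_of_gt hcpos)]
      ring
    -- expand along column 0
    have hexp := Matrix.det_succ_column_zero B
    rw [Finset.sum_eq_single (0 : Fin (k+1))] at hexp
    rotate_left
    · intro p _ hp
      rw [hBp0 p hp]
      ring
    · intro h
      exact absurd (Finset.mem_univ _) h
    rw [Fin.succAbove_zero, hB00] at hexp
    simp only [Fin.val_zero, pow_zero, one_mul] at hexp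
    -- identify the submatrix
    set u' : ℕ → ℝ := fun s => u (s+1) - b with hu'
    set v' : ℕ → ℝ := fun s => v (s+1) - b with hv'
    have hub : t * u 0 = b := by
      have hmm : c * b = u 0 * v 0 := by rw [hc, hb]; exact min_mul_max _ _
      rw [ht, div_mul_eq_mul_div, div_eq_iff (ne_of_gt hcpos)]
      linear_combination -hmm
    have hsub : B.submatrix Fin.succ Fin.succ = Matrix.of fun p l : Fin k => min (u' p) (v' l) := by
      ext p l
      have hl1 : u 0 ≤ v ((l:ℕ)+1) := by
        have := hchain ((l:ℕ)+1) (by omega) (by omega)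
        calc u 0 ≤ b := le_max_left _ _
          _ ≤ v ((l:ℕ)+1) := le_of_lt (lt_of_lt_of_le this (min_le_right _ _))
      simp only [Matrix.submatrix_apply, hB, Matrix.of_apply, hM, hcoef]
      rw [if_neg (Fin.succ_ne_zero p)]
      simp only [Fin.val_succ, Fin.val_zero]
      rw [min_eq_left hl1]
      simp only [hu', hv']
      rw [min_sub_sub_right]
      rw [show -t * u 0 = -b by rw [neg_mul, hub]]
      ring
    rw [hsub] at hexp
    have hih := det_min_matrix k u' v'
      (fun s hs => by
        simp only [hu']
        have := hchain (s+1) (by omega) (by omega)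
        have : b < u (s+1) := lt_of_lt_of_le this (min_le_left _ _)
        linarith)
      (fun s hs => by
        simp only [hv']
        have := hchain (s+1) (by omega) (by omega)
        have : b < v (s+1) := lt_of_lt_of_le this (min_le_right _ _)
        linarith)
      (fun s hs => by
        simp only [hu', hv']
        rw [min_sub_sub_right, max_sub_sub_right]
        exact sub_lt_sub_right (hint (s+1) (by omega)) b)
    rw [hih] at hexp
    rw [hdet] at hexp
    rw [hexp]
    -- now the product identity
    rw [Fin.prod_univ_succ]
    congr 1
    · simp [hc]
    refine Finset.prod_congr rfl fun p _ => ?_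
    simp only [Fin.val_succ, Nat.add_sub_cancel]
    rw [if_neg (Nat.succ_ne_zero _)]
    rcases Nat.eq_zero_or_pos (p : ℕ) with h0 | h0
    · rw [h0]
      simp only [if_pos rfl, if_true, hu', hv', min_sub_sub_right]
      rw [hb]
      ring
    · rw [if_neg (by omega)]
      simp only [hu', hv', min_sub_sub_right, max_sub_sub_right]
      rw [show (p:ℕ) - 1 + 1 = (p:ℕ) from by omega]
      ring

lemma vanish_aux {n k : ℕ} (x : Fin n → ℝ) (hx : Monotone x)
    (i j : Fin k → Fin n) (hi : Monotone i) (hj : Monotone j)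
    (m : ℕ) (hm : m + 1 < k) (hij : i ⟨m+1, hm⟩ ≤ j ⟨m, by omega⟩) :
    ((Ematrix n x).submatrix i j).det = 0 := by
  apply det_zero_of_block _ m hm (fun p => Real.exp (x (i p))) (fun l => Real.exp (-x (j l)))
  intro p l hp hl
  have h1 : i p ≤ j l := by
    calc i p ≤ i ⟨m+1, hm⟩ := hi (by rw [Fin.le_def]; exact hp)
      _ ≤ j ⟨m, by omega⟩ := hij
      _ ≤ j l := hj (by rw [Fin.le_def]; exact hl)
  have h2 : x (i p) ≤ x (j l) := hx h1
  show Real.exp (-|x (i p) - x (j l)|) = _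
  rw [abs_of_nonpos (by linarith), neg_neg, ← Real.exp_add]
  congr 1

/-- Minors of the matrix `E_{jk} = e^{-|x_j - x_k|}` for `x_1 < … < x_n`:
if the pairs `(i_m, j_m)` are strictly increasing (both entries of each pair less than
both entries of the next), then
`det E_{IJ} = ∏ (1 - E_{β_m α_{m+1}}²) ∏ E_{α_m β_m}`; otherwise `det E_{IJ} = 0`. -/
theorem minors_of_E (n k : ℕ) (x : Fin n → ℝ) (hx : StrictMono x)
    (I J : Finset (Fin n)) (hI : I.card = k) (hJ : J.card = k) :
    (let iE := I.orderEmbOfFin hI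
     let jE := J.orderEmbOfFin hJ
     let E := Ematrix n x
     let α : Fin k → Fin n := fun m => min (iE m) (jE m)
     let β : Fin k → Fin n := fun m => max (iE m) (jE m)
     ((∀ m : Fin k, ∀ h : (m : ℕ) + 1 < k, β m < α ⟨(m : ℕ) + 1, h⟩) →
        Matrix.det (E.submatrix iE jE) =
          (∏ m : Fin k, if h : (m : ℕ) + 1 < k then
              1 - (E (β m) (α ⟨(m : ℕ) + 1, h⟩)) ^ 2 else 1) *
          ∏ m : Fin k, E (α m) (β m)) ∧
     (¬ (∀ m : Fin k, ∀ h : (m : ℕ) + 1 < k, β m < α ⟨(m : ℕ) + 1, h⟩) →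
        Matrix.det (E.submatrix iE jE) = 0)) := by
  intro iE jE E α β
  constructor
  · intro hcond
    classical
    set u : ℕ → ℝ := fun s => if h : s < k then Real.exp (2 * x (iE ⟨s, h⟩)) else 1 with hu
    set v : ℕ → ℝ := fun s => if h : s < k then Real.exp (2 * x (jE ⟨s, h⟩)) else 1 with hv
    have hval : ∀ p : Fin k, u ↑p = Real.exp (2 * x (iE p)) := by
      intro p; simp only [hu]; rw [dif_pos p.isLt]
    have vval : ∀ p : Fin k, v ↑p = Real.exp (2 * x (jE p)) := by
      intro p; simp only [hv]; rw [dif_pos p.isLt]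
    have hupos : ∀ s, s < k → 0 < u s := by
      intro s hs; simp only [hu]; rw [dif_pos hs]; exact Real.exp_pos _
    have hvpos : ∀ s, s < k → 0 < v s := by
      intro s hs; simp only [hv]; rw [dif_pos hs]; exact Real.exp_pos _
    have hint : ∀ s, s + 1 < k → max (u s) (v s) < min (u (s+1)) (v (s+1)) := by
      intro s hs
      have hsk : s < k := by omega
      have h1 : u s = Real.exp (2 * x (iE ⟨s, hsk⟩)) := by simp only [hu]; rw [dif_pos hsk]
      have h2 : v s = Real.exp (2 * x (jE ⟨s, hsk⟩)) := by simp only [hv]; rw [dif_pos hsk]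
      have h3 : u (s+1) = Real.exp (2 * x (iE ⟨s+1, hs⟩)) := by simp only [hu]; rw [dif_pos hs]
      have h4 : v (s+1) = Real.exp (2 * x (jE ⟨s+1, hs⟩)) := by simp only [hv]; rw [dif_pos hs]
      rw [h1, h2, h3, h4, exp2_max, exp2_min, ← hx.monotone.map_max, ← hx.monotone.map_min]
      have hb : (max (iE ⟨s,hsk⟩) (jE ⟨s,hsk⟩)) < (min (iE ⟨s+1,hs⟩) (jE ⟨s+1,hs⟩)) :=
        hcond ⟨s, hsk⟩ hs
      have hxb := hx hb
      exact Real.exp_lt_exp.mpr (by linarith)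
    have hA : E.submatrix ⇑iE ⇑jE =
        Matrix.of (fun p l : Fin k => Real.exp (-x (iE p)) *
          ((Matrix.of (fun p' l' : Fin k => Real.exp (-x (jE l')) *
            ((Matrix.of fun p'' l'' : Fin k => min (u ↑p'') (v ↑l'')) p' l'))) p l)) := by
      ext p l
      show Real.exp (-|x (iE p) - x (jE l)|) = _
      simp only [Matrix.of_apply]
      rw [hval p, vval l]
      exact exp_abs_eq _ _
    rw [hA, Matrix.det_mul_column, Matrix.det_mul_row, det_min_matrix k u v hupos hvpos hint]
    -- abbreviation f
    set f : Fin k → ℝ := fun m => 1 - Real.exp (2 * (x (β ⟨(m:ℕ)-1,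
      Nat.lt_of_le_of_lt (Nat.sub_le _ _) m.isLt⟩) - x (α m))) with hf
    have hEsq : ∀ (m : Fin k) (h : (m:ℕ)+1 < k),
        1 - (E (β m) (α ⟨(m:ℕ)+1, h⟩)) ^ 2 = f ⟨(m:ℕ)+1, h⟩ := by
      intro m h
      have hlt : β m < α ⟨(m:ℕ)+1, h⟩ := hcond m h
      have hxlt : x (β m) ≤ x (α ⟨(m:ℕ)+1, h⟩) := hx.monotone (le_of_lt hlt)
      have hE : E (β m) (α ⟨(m:ℕ)+1, h⟩) = Real.exp (x (β m) - x (α ⟨(m:ℕ)+1, h⟩)) := by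
        show Real.exp (-|x (β m) - x (α ⟨(m:ℕ)+1, h⟩)|) = _
        rw [abs_of_nonpos (by linarith), neg_neg]
      rw [hE, sq, ← Real.exp_add]
      simp only [hf]
      have : (⟨((⟨(m:ℕ)+1, h⟩ : Fin k) : ℕ)-1,
          Nat.lt_of_le_of_lt (Nat.sub_le _ _) (⟨(m:ℕ)+1, h⟩ : Fin k).isLt⟩ : Fin k) = m := by
        exact Fin.ext (by simp)
      rw [this]
      congr 2
      ring
    have hR1 : (∏ m : Fin k, if h : (m : ℕ) + 1 < k then
          1 - (E (β m) (α ⟨(m : ℕ) + 1, h⟩)) ^ 2 else 1) =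
        ∏ m : Fin k, if (m:ℕ) = 0 then 1 else f m := by
      rw [← prod_shift f]
      refine Finset.prod_congr rfl fun m _ => ?_
      by_cases h : (m:ℕ)+1 < k
      · rw [dif_pos h, dif_pos h, hEsq m h]
      · rw [dif_neg h, dif_neg h]
    rw [hR1, ← mul_assoc, ← Finset.prod_mul_distrib, ← Finset.prod_mul_distrib,
      ← Finset.prod_mul_distrib]
    refine Finset.prod_congr rfl fun m _ => ?_
    have e1 : Real.exp (-x (iE m)) * Real.exp (-x (jE m)) = Real.exp (-(x (α m) + x (β m))) := by
      rw [← Real.exp_add]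
      congr 1
      have h5 : x (α m) + x (β m) = x (iE m) + x (jE m) := by
        show x (min (iE m) (jE m)) + x (max (iE m) (jE m)) = _
        rw [hx.monotone.map_min, hx.monotone.map_max, min_add_max]
      linarith
    have e2 : min (u ↑m) (v ↑m) = Real.exp (2 * x (α m)) := by
      rw [hval m, vval m, exp2_min]
      congr 2
      rw [← hx.monotone.map_min]
    have e3 : E (α m) (β m) = Real.exp (x (α m) - x (β m)) := by
      show Real.exp (-|x (α m) - x (β m)|) = _
      rw [abs_of_nonpos (sub_nonpos.mpr (hx.monotone min_le_max)), neg_neg]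
    by_cases h0 : (m:ℕ) = 0
    · rw [if_pos h0, if_pos h0, e1, e2, e3, sub_zero, one_mul, ← Real.exp_add]
      congr 1
      ring
    · rw [if_neg h0, if_neg h0, e1, e2, e3]
      have hlt1 : (m:ℕ)-1 < k := Nat.lt_of_le_of_lt (Nat.sub_le _ _) m.isLt
      have e4 : max (u ((m:ℕ)-1)) (v ((m:ℕ)-1)) =
          Real.exp (2 * x (β (⟨(m:ℕ)-1, hlt1⟩ : Fin k))) := by
        have h6 : u ((m:ℕ)-1) = Real.exp (2 * x (iE ⟨(m:ℕ)-1, hlt1⟩)) := by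
          simp only [hu]; rw [dif_pos hlt1]
        have h7 : v ((m:ℕ)-1) = Real.exp (2 * x (jE ⟨(m:ℕ)-1, hlt1⟩)) := by
          simp only [hv]; rw [dif_pos hlt1]
        rw [h6, h7, exp2_max]
        congr 2
        rw [← hx.monotone.map_max]
      rw [e4]
      simp only [hf]
      rw [mul_sub, sub_mul, one_mul, ← Real.exp_add, ← Real.exp_add, ← Real.exp_add]
      congr 2
      · ring
      · ring
  · intro hcond
    push_neg at hcond
    obtain ⟨m, hm, hle⟩ := hcond
    have hle' : min (iE ⟨(m:ℕ)+1, hm⟩) (jE ⟨(m:ℕ)+1, hm⟩) ≤ max (iE m) (jE m) := hle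
    have hcases : iE ⟨(m:ℕ)+1, hm⟩ ≤ jE m ∨ jE ⟨(m:ℕ)+1, hm⟩ ≤ iE m := by
      have hlt : m < (⟨(m:ℕ)+1, hm⟩ : Fin k) := by rw [Fin.lt_def]; simp
      rcases min_le_iff.mp hle' with h | h
      · rcases le_max_iff.mp h with h2 | h2
        · exact absurd h2 (not_le.mpr (iE.strictMono hlt))
        · exact Or.inl h2
      · rcases le_max_iff.mp h with h2 | h2
        · exact Or.inr h2
        · exact absurd h2 (not_le.mpr (jE.strictMono hlt))
    rcases hcases with hcase | hcase
    · exact vanish_aux x hx.monotone (⇑iE) (⇑jE) iE.monotone jE.monotone (m:ℕ) hm hcase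
    · rw [← Matrix.det_transpose]
      have htr : (E.submatrix ⇑iE ⇑jE)ᵀ = (Ematrix n x).submatrix ⇑jE ⇑iE := by
        ext p l
        show Real.exp (-|x (iE l) - x (jE p)|) = Real.exp (-|x (jE p) - x (iE l)|)
        rw [abs_sub_comm]
      rw [htr]
      exact vanish_aux x hx.monotone (⇑jE) (⇑iE) jE.monotone iE.monotone (m:ℕ) hm hcase
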